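/- arXiv:1409.3249 — 2 statements merged into one kernel-verified Lean document; each statement's English description precedes it below -/
import Mathlib

section
/- Let a₀ > 0, c ≥ 0, and 0 < λ₂ ≤ λ_N be real numbers, define α₀²(λ, g) := (a₀ − λg)² + 2cλg², χ := max(λ_N, λ₂ + 2c), and g* := 2a₀/(χ + λ₂ + 2c). Then for every real number g, max(α₀²(λ₂, g), α₀²(λ_N, g)) ≥ max(α₀²(λ₂, g*), α₀²(λ_N, g*)). -/
theorem stmt_12 (a₀ c lam₂ lamN : ℝ) (ha : 0 < a₀) (hc : 0 ≤ c) (h2 : 0 < lam₂)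
    (hN : lam₂ ≤ lamN)
    (α : ℝ → ℝ → ℝ) (hα : ∀ lam g : ℝ, α lam g = (a₀ - lam * g) ^ 2 + 2 * c * lam * g ^ 2)
    (χ gstar : ℝ) (hχ : χ = max lamN (lam₂ + 2 * c))
    (hgstar : gstar = 2 * a₀ / (χ + lam₂ + 2 * c)) :
    ∀ g : ℝ, max (α lam₂ g) (α lamN g) ≥ max (α lam₂ gstar) (α lamN gstar) := by
  intro g
  have hle : lam₂ + 2 * c ≤ χ := by rw [hχ]; exact le_max_right _ _
  have hS : 0 < χ + lam₂ + 2 * c := by nlinarith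
  have hg : gstar * (χ + lam₂ + 2 * c) = 2 * a₀ := by
    rw [hgstar]; field_simp
  have hgpos : 0 < gstar := by nlinarith
  simp only [hα, ge_iff_le]
  rcases le_total (lam₂ + 2 * c) lamN with h | h
  · have hχ' : χ = lamN := by rw [hχ]; exact max_eq_left h
    rw [hχ'] at hg
    have heq : (a₀ - lamN * gstar) ^ 2 + 2 * c * lamN * gstar ^ 2
        = (a₀ - lam₂ * gstar) ^ 2 + 2 * c * lam₂ * gstar ^ 2 := by
      linear_combination ((lamN - lam₂) * gstar) * hg
    rcases le_total g gstar with hg' | hg'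
    · have h3 : (lam₂ + 2 * c) * g ≤ gstar * lamN := by
        have t1 : (lam₂ + 2 * c) * g ≤ (lam₂ + 2 * c) * gstar :=
          mul_le_mul_of_nonneg_left hg' (by linarith)
        have t2 : gstar * (lam₂ + 2 * c) ≤ gstar * lamN :=
          mul_le_mul_of_nonneg_left h hgpos.le
        nlinarith
      have h1 : 0 ≤ lam₂ * (gstar - g) * (gstar * lamN - (lam₂ + 2 * c) * g) :=
        mul_nonneg (mul_nonneg h2.le (by linarith)) (by linarith)
      have hkey_eq : (a₀ - lam₂ * g) ^ 2 + 2 * c * lam₂ * g ^ 2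
          - ((a₀ - lam₂ * gstar) ^ 2 + 2 * c * lam₂ * gstar ^ 2)
          = lam₂ * (gstar - g) * (gstar * lamN - (lam₂ + 2 * c) * g) := by
        linear_combination (lam₂ * (g - gstar)) * hg
      have key : (a₀ - lam₂ * gstar) ^ 2 + 2 * c * lam₂ * gstar ^ 2
          ≤ (a₀ - lam₂ * g) ^ 2 + 2 * c * lam₂ * g ^ 2 := by linarith
      exact max_le (le_trans key (le_max_left _ _))
        (le_trans (heq ▸ key) (le_max_left _ _))
    · have h3 : lam₂ * gstar ≤ (lamN + 2 * c) * g := by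
        have t1 : lam₂ * gstar ≤ lam₂ * g := mul_le_mul_of_nonneg_left hg' h2.le
        have t2 : lam₂ * g ≤ (lamN + 2 * c) * g :=
          mul_le_mul_of_nonneg_right (by linarith) (by linarith)
        linarith
      have h1 : 0 ≤ lamN * (g - gstar) * ((lamN + 2 * c) * g - lam₂ * gstar) :=
        mul_nonneg (mul_nonneg (by linarith) (by linarith)) (by linarith)
      have hkey_eq : (a₀ - lamN * g) ^ 2 + 2 * c * lamN * g ^ 2
          - ((a₀ - lamN * gstar) ^ 2 + 2 * c * lamN * gstar ^ 2)
          = lamN * (g - gstar) * ((lamN + 2 * c) * g - lam₂ * gstar) := by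
        linear_combination (lamN * (g - gstar)) * hg
      have key : (a₀ - lamN * gstar) ^ 2 + 2 * c * lamN * gstar ^ 2
          ≤ (a₀ - lamN * g) ^ 2 + 2 * c * lamN * g ^ 2 := by linarith
      exact max_le (le_trans (heq ▸ key) (le_max_right _ _))
        (le_trans key (le_max_right _ _))
  · have hχ' : χ = lam₂ + 2 * c := by rw [hχ]; exact max_eq_right h
    rw [hχ'] at hg
    have hkey_eq : (a₀ - lam₂ * g) ^ 2 + 2 * c * lam₂ * g ^ 2
        - ((a₀ - lam₂ * gstar) ^ 2 + 2 * c * lam₂ * gstar ^ 2)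
        = lam₂ * (lam₂ + 2 * c) * (g - gstar) ^ 2 := by
      linear_combination (lam₂ * (g - gstar)) * hg
    have key : (a₀ - lam₂ * gstar) ^ 2 + 2 * c * lam₂ * gstar ^ 2
        ≤ (a₀ - lam₂ * g) ^ 2 + 2 * c * lam₂ * g ^ 2 := by
      nlinarith [mul_nonneg (mul_nonneg h2.le (by linarith : (0:ℝ) ≤ lam₂ + 2 * c))
        (sq_nonneg (g - gstar))]
    have hNle_eq : (a₀ - lam₂ * gstar) ^ 2 + 2 * c * lam₂ * gstar ^ 2
        - ((a₀ - lamN * gstar) ^ 2 + 2 * c * lamN * gstar ^ 2)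
        = gstar ^ 2 * (lamN - lam₂) * (lam₂ + 2 * c - lamN) := by
      linear_combination (-(lamN - lam₂) * gstar) * hg
    have hNle : (a₀ - lamN * gstar) ^ 2 + 2 * c * lamN * gstar ^ 2
        ≤ (a₀ - lam₂ * gstar) ^ 2 + 2 * c * lam₂ * gstar ^ 2 := by
      nlinarith [mul_nonneg (mul_nonneg (sq_nonneg gstar) (sub_nonneg.2 hN))
        (sub_nonneg.2 h)]
    exact max_le (le_trans key (le_max_left _ _))
      (le_trans (le_trans hNle key) (le_max_left _ _))
end

section
/- Let a₀ > 0, c ≥ 0, and 0 < λ₂ ≤ λ_N be real numbers, define α₀²(λ, g) := (a₀ − λg)² + 2cλg², χ := max(λ_N, λ₂ + 2c), and g* := 2a₀/(χ + λ₂ + 2c). Then α₀²(λ₂, g*) ≥ α₀²(λ_N, g*). -/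
theorem stmt_13 (a₀ c lam₂ lamN : ℝ) (ha : 0 < a₀) (hc : 0 ≤ c) (h2 : 0 < lam₂)
    (hN : lam₂ ≤ lamN)
    (α : ℝ → ℝ → ℝ) (hα : ∀ lam g : ℝ, α lam g = (a₀ - lam * g) ^ 2 + 2 * c * lam * g ^ 2)
    (χ gstar : ℝ) (hχ : χ = max lamN (lam₂ + 2 * c))
    (hgstar : gstar = 2 * a₀ / (χ + lam₂ + 2 * c)) :
    α lam₂ gstar ≥ α lamN gstar := by
  have hχN : lamN ≤ χ := hχ ▸ le_max_left _ _
  have hD : 0 < χ + lam₂ + 2 * c := by linarith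
  have hg : gstar * (χ + lam₂ + 2 * c) = 2 * a₀ := by
    rw [hgstar]; field_simp
  have hgpos : 0 < gstar := by
    rw [hgstar]; positivity
  rw [hα, hα]
  nlinarith [mul_nonneg (sub_nonneg.2 hN) hgpos.le,
    mul_nonneg (mul_nonneg (sub_nonneg.2 hN) hgpos.le) (mul_nonneg hgpos.le (sub_nonneg.2 hχN)),
    sq_nonneg gstar, mul_pos hgpos hgpos]
end
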